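/- Fix σ > 0, γ > 0 and m₀ ∈ ℝ, and define h : ℝ → ℝ by h(m) = d_γ( φ(·; m, σ), φ(·; m₀, σ) ). Then h(m₀) = 0, h'(m₀) = 0, and h''(m₀) = (2π)^{-γ/2} σ^{-(γ+2)} (1+γ)^{-1/2}; equivalently, h''(m₀) = (1+γ) s_γ where s_γ := (2π)^{-γ/2} σ^{-(γ+2)} (1+γ)^{-3/2}. -/

import Mathlib

open MeasureTheory Real

/-- The `N(μ, σ²)` probability density function. -/
noncomputable def normalPDF (μ σ y : ℝ) : ℝ :=
  (Real.sqrt (2 * Real.pi * σ ^ 2))⁻¹ * Real.exp (-(y - μ) ^ 2 / (2 * σ ^ 2))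

/-- The density power divergence with tuning parameter `γ > 0` between densities `f₁, f₂`. -/
noncomputable def dpd (γ : ℝ) (f₁ f₂ : ℝ → ℝ) : ℝ :=
  ∫ y, ((f₂ y) ^ (1 + γ) - (1 + 1 / γ) * (f₂ y) ^ γ * f₁ y + (1 / γ) * (f₁ y) ^ (1 + γ))

lemma gauss_int (b c : ℝ) :
    ∫ y : ℝ, Real.exp (-b * (y - c) ^ 2) = Real.sqrt (π / b) := by
  have h : (∫ y : ℝ, Real.exp (-b * (y - c) ^ 2)) = ∫ y : ℝ, Real.exp (-b * y ^ 2) :=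
    integral_sub_right_eq_self (fun y => Real.exp (-b * y ^ 2)) c
  rw [h, integral_gaussian]


lemma gauss_integrable {b : ℝ} (hb : 0 < b) (c : ℝ) :
    Integrable (fun y : ℝ => Real.exp (-b * (y - c) ^ 2)) :=
  (integrable_exp_neg_mul_sq hb).comp_sub_right c


lemma normalPDF_rpow (μ σ y r : ℝ) :
    normalPDF μ σ y ^ r =
      ((Real.sqrt (2 * π * σ ^ 2))⁻¹) ^ r * Real.exp (r * (-(y - μ) ^ 2 / (2 * σ ^ 2))) := by
  rw [normalPDF, Real.mul_rpow (by positivity) (Real.exp_nonneg _), ← Real.exp_mul, mul_comm (-(y - μ) ^ 2 / (2 * σ ^ 2)) r]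


lemma dpd_closed (σ γ m₀ : ℝ) (hσ : 0 < σ) (hγ : 0 < γ) (m : ℝ) :
    dpd γ (normalPDF m σ) (normalPDF m₀ σ) =
      (1 + 1 / γ) * (((Real.sqrt (2 * π * σ ^ 2))⁻¹) ^ (1 + γ) *
          Real.sqrt (π / ((1 + γ) / (2 * σ ^ 2)))) *
        (1 - Real.exp (-(γ / (2 * (1 + γ) * σ ^ 2)) * (m - m₀) ^ 2)) := by
  have hσ2 : (σ:ℝ) ^ 2 ≠ 0 := by positivity
  have h1γ : (0:ℝ) < 1 + γ := by linarith
  set A : ℝ := (Real.sqrt (2 * π * σ ^ 2))⁻¹ with hA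
  have hA0 : 0 < A := by rw [hA]; positivity
  set b : ℝ := (1 + γ) / (2 * σ ^ 2) with hbdef
  have hb : 0 < b := by rw [hbdef]; positivity
  set β : ℝ := γ / (2 * (1 + γ) * σ ^ 2) with hβ
  set cb : ℝ := (γ * m₀ + m) / (1 + γ) with hcb
  have key : ∀ y : ℝ,
      (normalPDF m₀ σ y) ^ (1 + γ) - (1 + 1 / γ) * (normalPDF m₀ σ y) ^ γ * normalPDF m σ y
        + (1 / γ) * (normalPDF m σ y) ^ (1 + γ)
      = A ^ (1 + γ) * Real.exp (-b * (y - m₀) ^ 2)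
        - ((1 + 1 / γ) * (A ^ (1 + γ) * Real.exp (-β * (m - m₀) ^ 2)))
            * Real.exp (-b * (y - cb) ^ 2)
        + (1 / γ) * (A ^ (1 + γ) * Real.exp (-b * (y - m) ^ 2)) := by
    intro y
    have e1 : (1 + γ) * (-(y - m₀) ^ 2 / (2 * σ ^ 2)) = -b * (y - m₀) ^ 2 := by
      rw [hbdef]; field_simp
    have e3 : (1 + γ) * (-(y - m) ^ 2 / (2 * σ ^ 2)) = -b * (y - m) ^ 2 := by
      rw [hbdef]; field_simp
    have e2 : γ * (-(y - m₀) ^ 2 / (2 * σ ^ 2)) + -(y - m) ^ 2 / (2 * σ ^ 2)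
        = -β * (m - m₀) ^ 2 + -b * (y - cb) ^ 2 := by
      rw [hβ, hbdef, hcb]; field_simp; ring
    have eA : A ^ (γ:ℝ) * A = A ^ (1 + γ) := by
      rw [Real.rpow_add hA0, Real.rpow_one]; ring
    have cross : (normalPDF m₀ σ y) ^ γ * normalPDF m σ y
        = A ^ (1 + γ) * Real.exp (-β * (m - m₀) ^ 2) * Real.exp (-b * (y - cb) ^ 2) := by
      have h2 := congrArg Real.exp e2
      rw [Real.exp_add, Real.exp_add] at h2
      rw [normalPDF_rpow, normalPDF]
      calc A ^ γ * Real.exp (γ * (-(y - m₀) ^ 2 / (2 * σ ^ 2)))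
            * (A * Real.exp (-(y - m) ^ 2 / (2 * σ ^ 2)))
          = (A ^ γ * A) * (Real.exp (γ * (-(y - m₀) ^ 2 / (2 * σ ^ 2)))
              * Real.exp (-(y - m) ^ 2 / (2 * σ ^ 2))) := by ring
        _ = A ^ (1 + γ) * (Real.exp (-β * (m - m₀) ^ 2) * Real.exp (-b * (y - cb) ^ 2)) := by
            rw [eA, h2]
        _ = A ^ (1 + γ) * Real.exp (-β * (m - m₀) ^ 2) * Real.exp (-b * (y - cb) ^ 2) := by ring
    rw [normalPDF_rpow m₀ σ y (1 + γ), normalPDF_rpow m σ y (1 + γ), e1, e3, ← hA]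
    linear_combination (-(1:ℝ) - 1 / γ) * cross
  have i1 : Integrable (fun y : ℝ => A ^ (1 + γ) * Real.exp (-b * (y - m₀) ^ 2)) :=
    (gauss_integrable hb m₀).const_mul _
  have i2 : Integrable (fun y : ℝ =>
      ((1 + 1 / γ) * (A ^ (1 + γ) * Real.exp (-β * (m - m₀) ^ 2)))
        * Real.exp (-b * (y - cb) ^ 2)) :=
    (gauss_integrable hb cb).const_mul _
  have i3 : Integrable (fun y : ℝ => (1 / γ) * (A ^ (1 + γ) * Real.exp (-b * (y - m) ^ 2))) :=
    ((gauss_integrable hb m).const_mul _).const_mul _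
  have i12 : Integrable (fun y : ℝ => A ^ (1 + γ) * Real.exp (-b * (y - m₀) ^ 2)
      - ((1 + 1 / γ) * (A ^ (1 + γ) * Real.exp (-β * (m - m₀) ^ 2)))
          * Real.exp (-b * (y - cb) ^ 2)) := i1.sub i2
  rw [dpd]
  simp only [key]
  rw [integral_add i12 i3, integral_sub i1 i2, integral_const_mul,
    integral_const_mul, integral_const_mul, integral_const_mul, gauss_int, gauss_int, gauss_int]
  ring


lemma deriv1 (C α m₀ m : ℝ) :
    HasDerivAt (fun m => C * (1 - Real.exp (-α * (m - m₀) ^ 2)))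
      (C * (2 * α * (m - m₀) * Real.exp (-α * (m - m₀) ^ 2))) m := by
  have h1 : HasDerivAt (fun m : ℝ => m - m₀) 1 m := (hasDerivAt_id m).sub_const m₀
  have h2 : HasDerivAt (fun m : ℝ => (m - m₀) ^ 2) (2 * (m - m₀)) m := by
    simpa using h1.fun_pow 2
  have h4 := (h2.const_mul (-α)).exp
  have h6 := ((hasDerivAt_const m (1 : ℝ)).fun_sub h4).const_mul C
  exact h6.congr_deriv (by ring)


lemma deriv2 (C α m₀ : ℝ) :
    HasDerivAt (fun m => C * (2 * α * (m - m₀) * Real.exp (-α * (m - m₀) ^ 2)))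
      (C * (2 * α)) m₀ := by
  have h1 : HasDerivAt (fun m : ℝ => m - m₀) 1 m₀ := (hasDerivAt_id m₀).sub_const m₀
  have h2 : HasDerivAt (fun m : ℝ => (m - m₀) ^ 2) (2 * (m₀ - m₀)) m₀ := by
    simpa using h1.fun_pow 2
  have h4 := (h2.const_mul (-α)).exp
  have h5 := h1.fun_mul h4
  have h6 := h5.const_mul (C * (2 * α))
  have : (fun m => C * (2 * α) * ((m - m₀) * Real.exp (-α * (m - m₀) ^ 2)))
      = fun m => C * (2 * α * (m - m₀) * Real.exp (-α * (m - m₀) ^ 2)) := by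
    funext m; ring
  rw [this] at h6
  exact h6.congr_deriv (by simp)


lemma scalar_eq (σ γ : ℝ) (hσ : 0 < σ) (hγ : 0 < γ) :
    ((1 + 1 / γ) * (((Real.sqrt (2 * π * σ ^ 2))⁻¹) ^ (1 + γ) *
        Real.sqrt (π / ((1 + γ) / (2 * σ ^ 2))))) * (2 * (γ / (2 * (1 + γ) * σ ^ 2)))
      = (2 * π) ^ (-γ / 2) * σ ^ (-(γ + 2)) * (1 + γ) ^ (-(1 : ℝ) / 2) := by
  have hπ : (0:ℝ) < π := Real.pi_pos
  have h2π : (0:ℝ) < 2 * π := by positivity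
  have hP : (0:ℝ) < 2 * π * σ ^ 2 := by positivity
  have h1γ : (0:ℝ) < 1 + γ := by linarith
  have e1 : (Real.sqrt (2 * π * σ ^ 2))⁻¹ = (2 * π * σ ^ 2) ^ (-(1/2) : ℝ) := by
    rw [Real.sqrt_eq_rpow, ← Real.rpow_neg hP.le]
  have e2 : ((2 * π * σ ^ 2) ^ (-(1/2) : ℝ)) ^ (1 + γ) = (2 * π * σ ^ 2) ^ (-(1 + γ)/2) := by
    rw [← Real.rpow_mul hP.le]; congr 1; ring
  have e3 : π / ((1 + γ) / (2 * σ ^ 2)) = (2 * π * σ ^ 2) / (1 + γ) := by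
    field_simp
  have e4 : Real.sqrt ((2 * π * σ ^ 2) / (1 + γ))
      = (2 * π * σ ^ 2) ^ ((1:ℝ)/2) * (1 + γ) ^ (-(1:ℝ)/2) := by
    rw [Real.sqrt_eq_rpow, Real.div_rpow hP.le h1γ.le, div_eq_mul_inv, ← Real.rpow_neg h1γ.le]
    norm_num
  have e5 : (2 * π * σ ^ 2) ^ (-(1 + γ)/2 : ℝ) * (2 * π * σ ^ 2) ^ ((1:ℝ)/2)
      = (2 * π * σ ^ 2) ^ (-γ/2 : ℝ) := by
    rw [← Real.rpow_add hP]; congr 1; ring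
  have e6 : (2 * π * σ ^ 2) ^ (-γ/2 : ℝ) = (2 * π) ^ (-γ/2 : ℝ) * σ ^ (-γ : ℝ) := by
    rw [Real.mul_rpow h2π.le (sq_nonneg σ)]
    congr 1
    rw [← Real.rpow_natCast σ 2, ← Real.rpow_mul hσ.le]
    congr 1; push_cast; ring
  have e7 : σ ^ (-(γ + 2) : ℝ) = σ ^ (-γ : ℝ) * (σ ^ 2)⁻¹ := by
    rw [show (-(γ + 2) : ℝ) = -γ + (-2) by ring, Real.rpow_add hσ]
    congr 1
    rw [show ((-2 : ℝ)) = -((2:ℕ):ℝ) by norm_num, Real.rpow_neg hσ.le, Real.rpow_natCast]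
  have e56 : (2 * π * σ ^ 2) ^ (-(1 + γ)/2 : ℝ) * ((2 * π * σ ^ 2) ^ ((1:ℝ)/2)
      * (1 + γ) ^ (-(1:ℝ)/2)) = (2 * π) ^ (-γ/2 : ℝ) * σ ^ (-γ : ℝ) * (1 + γ) ^ (-(1:ℝ)/2) := by
    rw [← mul_assoc, e5, e6]
  rw [e1, e2, e3, e4, e56, e7]
  field_simp
  ring

/-- for `h(m) = d_γ(φ(·;m,σ), φ(·;m₀,σ))` one has `h(m₀) = 0`, `h'(m₀) = 0` and
`h''(m₀) = (2π)^{−γ/2} σ^{−(γ+2)} (1+γ)^{−1/2} = (1+γ) s_γ` with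
`s_γ = (2π)^{−γ/2} σ^{−(γ+2)} (1+γ)^{−3/2}`. -/
theorem dpd_normal_mean_second_derivative
    (σ γ m₀ : ℝ) (hσ : 0 < σ) (hγ : 0 < γ) :
    let h : ℝ → ℝ := fun m => dpd γ (normalPDF m σ) (normalPDF m₀ σ)
    let sγ : ℝ := (2 * Real.pi) ^ (-γ / 2) * σ ^ (-(γ + 2)) * (1 + γ) ^ (-(3 : ℝ) / 2)
    h m₀ = 0 ∧ deriv h m₀ = 0 ∧
      deriv (deriv h) m₀ = (2 * Real.pi) ^ (-γ / 2) * σ ^ (-(γ + 2)) * (1 + γ) ^ (-(1 : ℝ) / 2) ∧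
      deriv (deriv h) m₀ = (1 + γ) * sγ := by
  intro h sγ
  have h1γ : (0:ℝ) < 1 + γ := by linarith
  set C : ℝ := (1 + 1 / γ) * (((Real.sqrt (2 * π * σ ^ 2))⁻¹) ^ (1 + γ) *
      Real.sqrt (π / ((1 + γ) / (2 * σ ^ 2)))) with hC
  set α : ℝ := γ / (2 * (1 + γ) * σ ^ 2) with hα
  have hfun : h = fun m => C * (1 - Real.exp (-α * (m - m₀) ^ 2)) :=
    funext fun m => dpd_closed σ γ m₀ hσ hγ m
  have hd : deriv h = fun m => C * (2 * α * (m - m₀) * Real.exp (-α * (m - m₀) ^ 2)) := by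
    rw [hfun]; funext m; exact (deriv1 C α m₀ m).deriv
  have hval : deriv (deriv h) m₀ = C * (2 * α) := by
    rw [hd]; exact (deriv2 C α m₀).deriv
  have hscalar : C * (2 * α) = (2 * Real.pi) ^ (-γ / 2) * σ ^ (-(γ + 2)) *
      (1 + γ) ^ (-(1 : ℝ) / 2) := by
    rw [hC, hα]; exact scalar_eq σ γ hσ hγ
  refine ⟨?_, ?_, ?_, ?_⟩
  · rw [hfun]; simp
  · rw [hd]; simp
  · rw [hval, hscalar]
  · rw [hval, hscalar]
    have hpow : (1 + γ) * (1 + γ) ^ (-(3:ℝ)/2) = (1 + γ) ^ (-(1:ℝ)/2) := by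
      have h := Real.rpow_add h1γ 1 (-(3:ℝ)/2)
      rw [Real.rpow_one] at h
      rw [← h]; norm_num
    show _ = (1 + γ) * ((2 * Real.pi) ^ (-γ / 2) * σ ^ (-(γ + 2)) * (1 + γ) ^ (-(3 : ℝ) / 2))
    rw [show (1 + γ) * ((2 * Real.pi) ^ (-γ / 2) * σ ^ (-(γ + 2)) * (1 + γ) ^ (-(3 : ℝ) / 2))
        = (2 * Real.pi) ^ (-γ / 2) * σ ^ (-(γ + 2)) * ((1 + γ) * (1 + γ) ^ (-(3:ℝ)/2)) by ring,
      hpow]
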